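/- arXiv:1311.3214 — 4 statements merged into one kernel-verified Lean document; each statement's English description precedes it below -/
import Mathlib

section
/- Let r > 1, N ≥ 2, and 0 ≤ d < 1 with d ≠ 1/2. Define γ(d) = (r(1-d)+d)/((1-d)+rd) and ρ(d) = (1 - γ(d))/(1 - γ(d)^N). Then ρ(d) < ρ(1), where ρ(1) = (1 - 1/r)/(1 - 1/r^N). -/
/-- For `r > 1`, `N ≥ 2`, and `0 ≤ d < 1` with `d ≠ 1/2`, the
mean-field fixation probability `ρ(d) = (1-γ(d))/(1-γ(d)^N)` with
`γ(d) = (r(1-d)+d)/((1-d)+rd)` satisfies `ρ(d) < ρ(1) = (1-1/r)/(1-1/r^N)`. -/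
theorem stmt_2 (r : ℝ) (hr : 1 < r) (N : ℕ) (hN : 2 ≤ N)
    (d : ℝ) (hd0 : 0 ≤ d) (hd1 : d < 1) (hdhalf : d ≠ 1 / 2)
    (γ : ℝ → ℝ) (hγ : ∀ x, γ x = (r * (1 - x) + x) / ((1 - x) + r * x))
    (ρ : ℝ → ℝ) (hρ : ∀ x, ρ x = (1 - γ x) / (1 - γ x ^ N)) :
    ρ d < (1 - 1 / r) / (1 - 1 / r ^ N) := by
  have hrpos : (0:ℝ) < r := lt_trans one_pos hr
  have hDpos : 0 < (1 - d) + r * d := by nlinarith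
  have hNmpos : 0 < r * (1 - d) + d := by nlinarith
  have hg : γ d = (r * (1 - d) + d) / ((1 - d) + r * d) := hγ d
  have hgpos : 0 < γ d := by rw [hg]; positivity
  have hgne1 : γ d ≠ 1 := by
    rw [hg]
    intro h
    have heq : r * (1 - d) + d = (1 - d) + r * d :=
      (div_eq_one_iff_eq (ne_of_gt hDpos)).mp h
    have h2 : (r - 1) * (1 - 2 * d) = 0 := by nlinarith
    rcases mul_eq_zero.mp h2 with h3 | h3
    · linarith
    · exact hdhalf (by linarith)
  have hglt : 1 / r < γ d := by
    rw [hg, div_lt_div_iff₀ hrpos hDpos]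
    nlinarith [mul_pos (show (0:ℝ) < r * r - 1 by nlinarith) (show (0:ℝ) < 1 - d by linarith)]
  -- key rewriting lemma
  have hsum : ∀ g : ℝ, 0 < g → g ≠ 1 →
      (1 - g) / (1 - g ^ N) = (∑ i ∈ Finset.range N, g ^ i)⁻¹ := by
    intro g hgp hg1
    have h1g : (1 : ℝ) - g ≠ 0 := sub_ne_zero_of_ne (Ne.symm hg1)
    have hfact : 1 - g ^ N = (1 - g) * ∑ i ∈ Finset.range N, g ^ i := by
      have h := geom_sum_mul g N
      nlinarith [h]
    rw [hfact, div_mul_cancel_left₀ h1g]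
  have hrinv1 : (1 : ℝ) / r ≠ 1 := by
    intro h
    have : r = 1 := by field_simp at h; linarith
    linarith
  have hrinvpos : 0 < (1:ℝ) / r := by positivity
  have hSpos : 0 < ∑ i ∈ Finset.range N, (1 / r) ^ i :=
    Finset.sum_pos (fun i _ => pow_pos hrinvpos i) (by simp; omega)
  have hSlt : (∑ i ∈ Finset.range N, (1 / r) ^ i) < ∑ i ∈ Finset.range N, (γ d) ^ i := by
    apply Finset.sum_lt_sum
    · intro i _
      exact pow_le_pow_left₀ (le_of_lt hrinvpos) (le_of_lt hglt) i
    · exact ⟨1, Finset.mem_range.mpr (by omega), by simpa using hglt⟩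
  have hRHS : (1 - 1 / r) / (1 - 1 / r ^ N)
      = (∑ i ∈ Finset.range N, (1 / r) ^ i)⁻¹ := by
    rw [← hsum (1 / r) hrinvpos hrinv1, one_div, inv_pow, ← one_div (r ^ N)]
  rw [hρ d, hsum (γ d) hgpos hgne1, hRHS]
  exact inv_strictAnti₀ hSpos hSlt
end

section
/- Let r > 1, N ≥ 2, and 0 ≤ d < 1/2. Define γ(d) = (r(1-d)+d)/((1-d)+rd) and ρ(r) = (1 - γ)/(1 - γ^N). Then γ(d) > 1 and ρ is strictly decreasing as a function of r on (1,∞). -/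
lemma aux_rho_eq (N : ℕ) (x : ℝ) (hx : 1 < x) :
    (1 - x) / (1 - x ^ N) = 1 / ∑ i ∈ Finset.range N, x ^ i := by
  have hs : (x - 1) * ∑ i ∈ Finset.range N, x ^ i = x ^ N - 1 := by
    rw [mul_comm]; exact geom_sum_mul x N
  have hxe : (0:ℝ) < x - 1 := by linarith
  calc (1 - x) / (1 - x ^ N) = (x - 1) / (x ^ N - 1) := by
        rw [← neg_div_neg_eq]; ring_nf
    _ = (x - 1) / ((x - 1) * ∑ i ∈ Finset.range N, x ^ i) := by rw [hs]
    _ = 1 / ∑ i ∈ Finset.range N, x ^ i := by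
        rw [div_mul_eq_div_div, div_self (ne_of_gt hxe)]

/-- For `N ≥ 2` and `0 ≤ d < 1/2`, with
`γ(r) = (r(1-d)+d)/((1-d)+rd)` and `ρ(r) = (1-γ)/(1-γ^N)`, we have `γ(r) > 1`
for all `r > 1`, and `ρ` is strictly decreasing in `r` on `(1,∞)`. -/
theorem stmt_3 (N : ℕ) (hN : 2 ≤ N) (d : ℝ) (hd0 : 0 ≤ d) (hd : d < 1 / 2)
    (γ : ℝ → ℝ) (hγ : ∀ r, γ r = (r * (1 - d) + d) / ((1 - d) + r * d))
    (ρ : ℝ → ℝ) (hρ : ∀ r, ρ r = (1 - γ r) / (1 - γ r ^ N)) :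
    (∀ r : ℝ, 1 < r → 1 < γ r) ∧ StrictAntiOn ρ (Set.Ioi (1 : ℝ)) := by
  have hden : ∀ r : ℝ, 1 < r → 0 < (1 - d) + r * d := by
    intro r hr; nlinarith
  have hγ1 : ∀ r : ℝ, 1 < r → 1 < γ r := by
    intro r hr
    rw [hγ r, lt_div_iff₀ (hden r hr)]
    nlinarith
  refine ⟨hγ1, ?_⟩
  intro a ha b hb hab
  simp only [Set.mem_Ioi] at ha hb
  have hga := hγ1 a ha
  have hgb := hγ1 b hb
  have hmono : γ a < γ b := by
    rw [hγ a, hγ b, div_lt_div_iff₀ (hden a ha) (hden b hb)]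
    nlinarith
  rw [hρ a, hρ b, aux_rho_eq N _ hga, aux_rho_eq N _ hgb]
  have hsum_pos : 0 < ∑ i ∈ Finset.range N, γ a ^ i := by
    apply Finset.sum_pos
    · intro i _; positivity
    · exact Finset.nonempty_range_iff.2 (by omega)
  apply one_div_lt_one_div_of_lt hsum_pos
  apply Finset.sum_lt_sum
  · intro i _
    exact pow_le_pow_left₀ (by linarith) hmono.le i
  · exact ⟨1, Finset.mem_range.2 (by omega), by simpa using hmono⟩
end

section
/- Let r > 1, N ≥ 2, and 1/2 < d ≤ 1. Define γ(d) = (r(1-d)+d)/((1-d)+rd) and ρ(r) = (1 - γ)/(1 - γ^N). Then γ(d) < 1 and ρ is strictly increasing as a function of r on (1,∞). -/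
/-- For `N ≥ 2` and `1/2 < d ≤ 1`, with
`γ(r) = (r(1-d)+d)/((1-d)+rd)` and `ρ(r) = (1-γ)/(1-γ^N)`, we have `γ(r) < 1`
for all `r > 1`, and `ρ` is strictly increasing in `r` on `(1,∞)`. -/
theorem stmt_4 (N : ℕ) (hN : 2 ≤ N) (d : ℝ) (hd : 1 / 2 < d) (hd1 : d ≤ 1)
    (γ : ℝ → ℝ) (hγ : ∀ r, γ r = (r * (1 - d) + d) / ((1 - d) + r * d))
    (ρ : ℝ → ℝ) (hρ : ∀ r, ρ r = (1 - γ r) / (1 - γ r ^ N)) :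
    (∀ r : ℝ, 1 < r → γ r < 1) ∧ StrictMonoOn ρ (Set.Ioi (1 : ℝ)) := by
  have hd0 : 0 < d := by linarith
  have hden : ∀ r : ℝ, 1 < r → 0 < (1 - d) + r * d := by
    intro r hr; nlinarith
  have hγlt : ∀ r : ℝ, 1 < r → γ r < 1 := by
    intro r hr
    rw [hγ, div_lt_one (hden r hr)]
    nlinarith
  have hγpos : ∀ r : ℝ, 1 < r → 0 < γ r := by
    intro r hr
    rw [hγ]
    apply div_pos _ (hden r hr)
    nlinarith
  have hγmono : ∀ a b : ℝ, 1 < a → a < b → γ b < γ a := by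
    intro a b ha hab
    rw [hγ, hγ, div_lt_div_iff₀ (hden b (by linarith)) (hden a ha)]
    nlinarith
  have hρ' : ∀ r : ℝ, 1 < r → ρ r = 1 / ∑ i ∈ Finset.range N, γ r ^ i := by
    intro r hr
    have hne : 1 - γ r ≠ 0 := by have := hγlt r hr; linarith
    have h1 : 1 - γ r ^ N = (1 - γ r) * ∑ i ∈ Finset.range N, γ r ^ i := by
      linear_combination geom_sum_mul (γ r) N
    rw [hρ, h1, div_mul_cancel_left₀ hne, one_div]
  refine ⟨hγlt, ?_⟩
  intro a ha b hb hab
  simp only [Set.mem_Ioi] at ha hb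
  rw [hρ' a ha, hρ' b hb]
  have hSb : 0 < ∑ i ∈ Finset.range N, γ b ^ i := by
    apply Finset.sum_pos
    · intro i _; exact pow_pos (hγpos b hb) i
    · exact Finset.nonempty_range_iff.mpr (by omega)
  have hlt : ∑ i ∈ Finset.range N, γ b ^ i < ∑ i ∈ Finset.range N, γ a ^ i := by
    apply Finset.sum_lt_sum
    · intro i _
      exact pow_le_pow_left₀ (hγpos b hb).le (hγmono a b ha hab).le i
    · exact ⟨1, Finset.mem_range.mpr (by omega), by
        simpa using hγmono a b ha hab⟩
  exact one_div_lt_one_div_of_lt hSb hlt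
end

section
/- Let G be a finite connected bipartite graph with proper background 2-colouring, undergoing the birth-death process with fecundity advantage r ≥ 1 and uniform offspring dispersal. For a set M ⊆ V(G) of vertices initially occupied by red individuals, the fixation probability of red equals (Σ_{i∈M} 1/d_i)/(Σ_{j∈V(G)} 1/d_j), where d_i is the degree of vertex v_i; in particular it is independent of r. -/
open Filter

theorem markov_absorb {X : Type*} [Fintype X] [DecidableEq X]
    (P : Matrix X X ℝ)
    (h0 : ∀ i j, 0 ≤ P i j) (h1 : ∀ i, ∑ j, P i j = 1)
    (t bb : X) (htb : t ≠ bb) (ht : P t t = 1) (hb : P bb bb = 1)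
    (φ : X → ℝ) (c : ℝ) (hc : 0 < c)
    (hφ0 : ∀ j, 0 ≤ φ j) (hφc : ∀ j, φ j ≤ c)
    (hφt : φ t = c) (hφb : φ bb = 0)
    (hharm : ∀ i, ∑ j, P i j * φ j = φ i)
    (N : ℕ) (hreach : ∀ i, 0 < (P ^ N) i t + (P ^ N) i bb)
    (i : X) :
    Tendsto (fun n : ℕ => (P ^ n) i t) atTop (nhds (φ i / c)) := by
  -- nonnegativity of powers
  have hp0 : ∀ n, ∀ a j : X, 0 ≤ (P ^ n) a j := by
    intro n
    induction n with
    | zero => intro a j; simp [Matrix.one_apply]; positivity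
    | succ n ih =>
      intro a j
      rw [pow_succ, Matrix.mul_apply]
      exact Finset.sum_nonneg fun k _ => mul_nonneg (ih a k) (h0 k j)
  -- row sums of powers
  have hp1 : ∀ n, ∀ a : X, ∑ j, (P ^ n) a j = 1 := by
    intro n
    induction n with
    | zero => intro a; simp [Matrix.one_apply]
    | succ n ih =>
      intro a
      simp only [pow_succ, Matrix.mul_apply]
      rw [Finset.sum_comm]
      simp only [← Finset.mul_sum, h1, mul_one]
      exact ih a
  -- delta rows at absorbing states
  have hdelta : ∀ (s : X), P s s = 1 → ∀ n j, (P ^ n) s j = if j = s then 1 else 0 := by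
    intro s hs
    have hrow : ∀ j, P s j = if j = s then 1 else 0 := by
      intro j
      by_cases hj : j = s
      · subst hj; simpa using hs
      · simp only [if_neg hj]
        have hsum : ∑ x ∈ Finset.univ.erase s, P s x = 0 := by
          have := Finset.add_sum_erase Finset.univ (P s) (Finset.mem_univ s)
          have h1s := h1 s
          rw [← this] at h1s
          rw [hs] at h1s
          linarith
        have := (Finset.sum_eq_zero_iff_of_nonneg (fun x _ => h0 s x)).mp hsum
        exact this j (Finset.mem_erase.mpr ⟨hj, Finset.mem_univ j⟩)
    intro n
    induction n with
    | zero => intro j; simp [Matrix.one_apply, eq_comm]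
    | succ n ih =>
      intro j
      rw [pow_succ', Matrix.mul_apply]
      have : ∀ k ∈ Finset.univ, P s k * (P ^ n) k j
          = if k = s then (P ^ n) s j else 0 := by
        intro k _
        rw [hrow k]
        by_cases hk : k = s <;> simp [hk]
      rw [Finset.sum_congr rfl this, Finset.sum_ite_eq' Finset.univ s]
      simp [ih j]
  -- harmonic for powers
  have hH : ∀ n, ∀ a : X, ∑ j, (P ^ n) a j * φ j = φ a := by
    intro n
    induction n with
    | zero => intro a; simp [Matrix.one_apply]
    | succ n ih =>
      intro a
      simp only [pow_succ', Matrix.mul_apply, Finset.sum_mul]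
      rw [Finset.sum_comm]
      simp only [mul_assoc, ← Finset.mul_sum]
      simp only [ih]
      exact hharm a
  -- transient set
  set Tr : Finset X := (Finset.univ.erase t).erase bb with hTr
  have htnot : t ∉ Tr := fun h => (Finset.mem_erase.mp (Finset.mem_erase.mp h).2).1 rfl
  have hbnot : bb ∉ Tr := fun h => (Finset.mem_erase.mp h).1 rfl
  -- the transient mass
  set u : ℕ → ℝ := fun n => ∑ j ∈ Tr, (P ^ n) i j with hu
  have hu0 : ∀ n, 0 ≤ u n := fun n => Finset.sum_nonneg fun j _ => hp0 n i j
  -- splitting sums over univ into t, bb, Tr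
  have hsplit : ∀ (g : X → ℝ), ∑ j, g j = g t + g bb + ∑ j ∈ Tr, g j := by
    intro g
    rw [← Finset.add_sum_erase Finset.univ g (Finset.mem_univ t),
        ← Finset.add_sum_erase (Finset.univ.erase t) g
          (Finset.mem_erase.mpr ⟨(Ne.symm htb), Finset.mem_univ bb⟩), ← add_assoc]
  -- key identity for u (n + m)
  have hkey : ∀ n m : ℕ, u (n + m)
      = ∑ k ∈ Tr, (P ^ n) i k * (∑ j ∈ Tr, (P ^ m) k j) := by
    intro n m
    have : ∀ j ∈ Tr, (P ^ (n + m)) i j = ∑ k, (P ^ n) i k * (P ^ m) k j := by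
      intro j _; rw [pow_add, Matrix.mul_apply]
    rw [hu]
    simp only []
    rw [Finset.sum_congr rfl this, Finset.sum_comm]
    rw [hsplit (fun k => ∑ j ∈ Tr, (P ^ n) i k * (P ^ m) k j)]
    have hzt : ∑ j ∈ Tr, (P ^ n) i t * (P ^ m) t j = 0 := by
      apply Finset.sum_eq_zero; intro j hj
      rw [hdelta t ht m j, if_neg]
      · ring
      · intro h; exact htnot (h ▸ hj)
    have hzb : ∑ j ∈ Tr, (P ^ n) i bb * (P ^ m) bb j = 0 := by
      apply Finset.sum_eq_zero; intro j hj
      rw [hdelta bb hb m j, if_neg]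
      · ring
      · intro h; exact hbnot (h ▸ hj)
    rw [hzt, hzb]
    simp [Finset.mul_sum]
  -- inner sums bounded by 1
  have hinner1 : ∀ m (k : X), ∑ j ∈ Tr, (P ^ m) k j ≤ 1 := by
    intro m k
    calc ∑ j ∈ Tr, (P ^ m) k j ≤ ∑ j, (P ^ m) k j :=
          Finset.sum_le_sum_of_subset_of_nonneg (Finset.subset_univ Tr)
            (fun j _ _ => hp0 m k j)
      _ = 1 := hp1 m k
  -- antitone
  have hanti : Antitone u := by
    apply antitone_nat_of_succ_le
    intro n
    have := hkey n 1
    rw [this]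
    calc ∑ k ∈ Tr, (P ^ n) i k * (∑ j ∈ Tr, (P ^ 1) k j)
        ≤ ∑ k ∈ Tr, (P ^ n) i k * 1 :=
          Finset.sum_le_sum fun k _ => mul_le_mul_of_nonneg_left (hinner1 1 k) (hp0 n i k)
      _ = u n := by simp [hu]
  -- epsilon
  obtain ⟨x0⟩ : Nonempty X := ⟨t⟩
  set ε : ℝ := Finset.univ.inf' (Finset.univ_nonempty_iff.mpr ⟨x0⟩)
      (fun k => (P ^ N) k t + (P ^ N) k bb) with hε
  have hεpos : 0 < ε := by
    rw [hε, Finset.lt_inf'_iff]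
    intro k _; exact hreach k
  have hεle : ∀ k, ε ≤ (P ^ N) k t + (P ^ N) k bb := by
    intro k; exact Finset.inf'_le _ (Finset.mem_univ k)
  -- decay
  have hdecay : ∀ n, u (n + N) ≤ (1 - ε) * u n := by
    intro n
    rw [hkey n N]
    have hbd : ∀ k : X, ∑ j ∈ Tr, (P ^ N) k j ≤ 1 - ε := by
      intro k
      have hsp := hsplit (fun j => (P ^ N) k j)
      have := hp1 N k
      have := hεle k
      nlinarith [hp1 N k, hεle k]
    calc ∑ k ∈ Tr, (P ^ n) i k * (∑ j ∈ Tr, (P ^ N) k j)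
        ≤ ∑ k ∈ Tr, (P ^ n) i k * (1 - ε) :=
          Finset.sum_le_sum fun k _ => mul_le_mul_of_nonneg_left (hbd k) (hp0 n i k)
      _ = (1 - ε) * u n := by rw [hu]; rw [← Finset.sum_mul]; ring
  -- u tends to 0
  have hulim : Tendsto u atTop (nhds 0) := by
    obtain ⟨L, hL⟩ : ∃ L, Tendsto u atTop (nhds L) := by
      refine ⟨⨅ n, u n, tendsto_atTop_ciInf hanti ⟨0, ?_⟩⟩
      rintro x ⟨n, rfl⟩; exact hu0 n
    have hL0 : 0 ≤ L := ge_of_tendsto hL (Eventually.of_forall hu0)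
    have hshift : Tendsto (fun n => u (n + N)) atTop (nhds L) :=
      hL.comp (tendsto_add_atTop_nat N)
    have hle : L ≤ (1 - ε) * L := by
      apply le_of_tendsto_of_tendsto' hshift (hL.const_mul (1 - ε))
      intro n; exact hdecay n
    have : L = 0 := by nlinarith
    rwa [this] at hL
  -- squeeze
  have hlow : ∀ n, φ i / c - u n ≤ (P ^ n) i t := by
    intro n
    have hHn := hH n i
    rw [hsplit (fun j => (P ^ n) i j * φ j)] at hHn
    have h2 : ∑ j ∈ Tr, (P ^ n) i j * φ j ≤ c * u n := by
      calc ∑ j ∈ Tr, (P ^ n) i j * φ j ≤ ∑ j ∈ Tr, (P ^ n) i j * c :=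
            Finset.sum_le_sum fun j _ => mul_le_mul_of_nonneg_left (hφc j) (hp0 n i j)
        _ = c * u n := by rw [hu, ← Finset.sum_mul]; ring
    rw [hφt, hφb, mul_zero, add_zero] at hHn
    rw [div_sub' (ne_of_gt hc), div_le_iff₀ hc]
    nlinarith
  have hhigh : ∀ n, (P ^ n) i t ≤ φ i / c := by
    intro n
    have hHn := hH n i
    rw [hsplit (fun j => (P ^ n) i j * φ j)] at hHn
    have h2 : 0 ≤ ∑ j ∈ Tr, (P ^ n) i j * φ j :=
      Finset.sum_nonneg fun j _ => mul_nonneg (hp0 n i j) (hφ0 j)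
    rw [hφt, hφb, mul_zero, add_zero] at hHn
    rw [le_div_iff₀ hc]
    nlinarith
  have hlowlim : Tendsto (fun n => φ i / c - u n) atTop (nhds (φ i / c)) := by
    simpa using (tendsto_const_nhds (x := φ i / c)).sub hulim
  exact tendsto_of_tendsto_of_tendsto_of_le_of_le hlowlim tendsto_const_nhds hlow hhigh

lemma exists_crossing {V : Type*} {G : SimpleGraph V} {a c : V} (p : G.Walk a c)
    (S : V → Bool) (ha : S a = true) (hc : S c = false) :
    ∃ v w, G.Adj v w ∧ S v = true ∧ S w = false := by
  revert ha hc
  induction p with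
  | nil => intro ha hc; rw [ha] at hc; cases hc
  | @cons x y z h p ih =>
    intro ha hc
    by_cases hy : S y = true
    · exact ih hy hc
    · exact ⟨x, y, h, ha, by simpa using hy⟩

theorem stmt_15 {V : Type*} [Fintype V] [DecidableEq V]
    (G : SimpleGraph V) [DecidableRel G.Adj]
    (hconn : G.Connected) (hcard : 2 ≤ Fintype.card V)
    (b : V → Bool) (hproper : ∀ u v : V, G.Adj u v → b u ≠ b v)
    (r : ℝ) (hr : 1 ≤ r)
    (f : (V → Bool) → V → ℝ)
    (hf : ∀ S v, f S v = if S v = b v then r else 1)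
    (P : Matrix (V → Bool) (V → Bool) ℝ)
    (hP : ∀ S T, P S T = ∑ v : V, ∑ w ∈ G.neighborFinset v,
      (f S v / ∑ u : V, f S u) * (1 / (G.degree v : ℝ)) *
        (if T = Function.update S w (S v) then 1 else 0))
    (M : Finset V) :
    Tendsto (fun n : ℕ => (P ^ n) (fun v => decide (v ∈ M)) (fun _ => true))
      atTop
      (nhds ((∑ i ∈ M, (1 : ℝ) / (G.degree i : ℝ)) /
        (∑ j : V, (1 : ℝ) / (G.degree j : ℝ)))) := by
  haveI : Nonempty V := Fintype.card_pos_iff.mp (by omega)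
  -- degrees are positive
  have hdeg : ∀ v : V, 0 < G.degree v := by
    intro v
    rw [G.degree_pos_iff_exists_adj]
    obtain ⟨u, hu⟩ := Fintype.exists_ne_of_one_lt_card (by omega) v
    obtain ⟨p⟩ := hconn.preconnected v u
    cases p with
    | nil => exact absurd rfl hu.symm
    | cons h _ => exact ⟨_, h⟩
  have hdegR : ∀ v : V, (0:ℝ) < (G.degree v : ℝ) := fun v => by exact_mod_cast hdeg v
  -- fecundity is positive
  have hfpos : ∀ S v, (0:ℝ) < f S v := by
    intro S v; rw [hf]; split <;> linarith
  have hF : ∀ S, (0:ℝ) < ∑ u : V, f S u :=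
    fun S => Finset.sum_pos (fun u _ => hfpos S u) Finset.univ_nonempty
  -- entries are nonnegative
  have h0 : ∀ S T, 0 ≤ P S T := by
    intro S T
    rw [hP]
    apply Finset.sum_nonneg; intro v _
    apply Finset.sum_nonneg; intro w _
    have := hfpos S v
    have := hF S
    have := hdegR v
    positivity
  -- master identity
  have hPg : ∀ (S : V → Bool) (g : (V → Bool) → ℝ),
      ∑ T : V → Bool, P S T * g T
        = ∑ v : V, ∑ w ∈ G.neighborFinset v,
            (f S v / ∑ u : V, f S u) * (1 / (G.degree v : ℝ))
              * g (Function.update S w (S v)) := by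
    intro S g
    simp only [hP, Finset.sum_mul]
    rw [Finset.sum_comm]
    refine Finset.sum_congr rfl fun v _ => ?_
    rw [Finset.sum_comm]
    refine Finset.sum_congr rfl fun w _ => ?_
    simp only [ite_mul, one_mul, zero_mul, mul_ite, mul_one, mul_zero]
    rw [Finset.sum_ite_eq' Finset.univ (Function.update S w (S v))]
    simp
  -- coefficient sum is 1
  have hcoef : ∀ S : V → Bool,
      ∑ v : V, ∑ _w ∈ G.neighborFinset v,
        (f S v / ∑ u : V, f S u) * (1 / (G.degree v : ℝ)) = 1 := by
    intro S
    have : ∀ v : V, ∑ _w ∈ G.neighborFinset v,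
        (f S v / ∑ u : V, f S u) * (1 / (G.degree v : ℝ))
          = (f S v) / (∑ u : V, f S u) := by
      intro v
      rw [Finset.sum_const, SimpleGraph.card_neighborFinset_eq_degree, nsmul_eq_mul]
      rw [mul_one_div, mul_div_cancel₀ _ (ne_of_gt (hdegR v))]
    rw [Finset.sum_congr rfl (fun v _ => this v), ← Finset.sum_div,
      div_self (ne_of_gt (hF S))]
  -- row sums are 1
  have h1 : ∀ S, ∑ T : V → Bool, P S T = 1 := by
    intro S
    have h := hPg S (fun _ => 1)
    simp only [mul_one] at h
    rw [h, hcoef S]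
  -- potential function
  set φ : (V → Bool) → ℝ := fun S => ∑ x : V, if S x then (1 / (G.degree x : ℝ)) else 0
    with hφdef
  have hφupd : ∀ (S : V → Bool) (w : V) (cc : Bool),
      φ (Function.update S w cc)
        = φ S + ((if cc then (1 / (G.degree w : ℝ)) else 0)
            - (if S w then (1 / (G.degree w : ℝ)) else 0)) := by
    intro S w cc
    rw [hφdef]
    simp only []
    rw [← Finset.add_sum_erase Finset.univ _ (Finset.mem_univ w),
        ← Finset.add_sum_erase Finset.univ
          (fun x => if S x then (1 / (G.degree x : ℝ)) else 0) (Finset.mem_univ w)]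
    have : ∀ x ∈ Finset.univ.erase w,
        (if Function.update S w cc x then (1 / (G.degree x : ℝ)) else 0)
          = (if S x then (1 / (G.degree x : ℝ)) else 0) := by
      intro x hx
      rw [Function.update_of_ne (Finset.mem_erase.mp hx).1]
    rw [Finset.sum_congr rfl this, Function.update_self]
    ring
  -- harmonicity
  have hharm : ∀ S : V → Bool, ∑ T : V → Bool, P S T * φ T = φ S := by
    intro S
    rw [hPg S φ]
    have hsplit : ∀ v : V, ∀ w ∈ G.neighborFinset v,
        (f S v / ∑ u : V, f S u) * (1 / (G.degree v : ℝ))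
            * φ (Function.update S w (S v))
          = (f S v / ∑ u : V, f S u) * (1 / (G.degree v : ℝ)) * φ S
            + (1 / ∑ u : V, f S u) *
              (f S v * (1 / (G.degree v : ℝ)) * (1 / (G.degree w : ℝ)) *
                ((if S v then (1:ℝ) else 0) - (if S w then (1:ℝ) else 0))) := by
      intro v w _
      rw [hφupd S w (S v)]
      have e1 : (if S v then (1 / (G.degree w : ℝ)) else 0)
          = (1 / (G.degree w : ℝ)) * (if S v then (1:ℝ) else 0) := by
        split <;> ring
      have e2 : (if S w then (1 / (G.degree w : ℝ)) else 0)
          = (1 / (G.degree w : ℝ)) * (if S w then (1:ℝ) else 0) := by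
        split <;> ring
      rw [e1, e2]
      field_simp
    rw [Finset.sum_congr rfl (fun v _ => Finset.sum_congr rfl (hsplit v))]
    simp only [Finset.sum_add_distrib, ← Finset.sum_mul, ← Finset.mul_sum]
    have e : (∑ v : V, (∑ _w ∈ G.neighborFinset v, f S v / ∑ u : V, f S u)
          * (1 / (G.degree v : ℝ)))
        = ∑ v : V, ∑ _w ∈ G.neighborFinset v,
            (f S v / ∑ u : V, f S u) * (1 / (G.degree v : ℝ)) :=
      Finset.sum_congr rfl fun v _ => Finset.sum_mul _ _ _
    rw [e, hcoef S, one_mul]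
    -- remains: the antisymmetric part vanishes
    have hanti : ∑ v : V, ∑ w ∈ G.neighborFinset v,
        (f S v * (1 / (G.degree v : ℝ)) * (1 / (G.degree w : ℝ)) *
          ((if S v then (1:ℝ) else 0) - (if S w then (1:ℝ) else 0))) = 0 := by
      set q : V → V → ℝ := fun v w =>
        f S v * (1 / (G.degree v : ℝ)) * (1 / (G.degree w : ℝ)) *
          ((if S v then (1:ℝ) else 0) - (if S w then (1:ℝ) else 0)) with hq
      have hqswap : ∀ v w : V, G.Adj v w → q w v = - q v w := by
        intro v w hvw
        by_cases hS : S v = S w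
        · rw [hq]; simp only [hS, sub_self, mul_zero, neg_zero]
        · have hfe : f S v = f S w := by
            have hb : b v ≠ b w := hproper v w hvw
            have hsw : S w = !(S v) := Bool.eq_not_iff.mpr (Ne.symm hS)
            have hbw : b w = !(b v) := Bool.eq_not_iff.mpr (Ne.symm hb)
            have hiff : (S w = b w) ↔ (S v = b v) := by
              rw [hsw, hbw]
              exact ⟨fun h => Bool.not_inj h, fun h => h ▸ rfl⟩
            rw [hf, hf]
            by_cases hvb : S v = b v
            · rw [if_pos hvb, if_pos (hiff.mpr hvb)]
            · rw [if_neg hvb, if_neg (fun h => hvb (hiff.mp h))]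
          rw [hq]
          simp only [hfe]
          ring
      have hconv : ∀ (g : V → V → ℝ), (∑ v : V, ∑ w ∈ G.neighborFinset v, g v w)
          = ∑ v : V, ∑ w : V, if G.Adj v w then g v w else 0 := by
        intro g
        refine Finset.sum_congr rfl fun v _ => ?_
        rw [SimpleGraph.neighborFinset_eq_filter, Finset.sum_filter]
      rw [hconv q]
      have h2 : (∑ v : V, ∑ w : V, if G.Adj v w then q v w else 0)
          = ∑ v : V, ∑ w : V, if G.Adj v w then - q v w else 0 := by
        rw [Finset.sum_comm]
        refine Finset.sum_congr rfl fun v _ => Finset.sum_congr rfl fun w _ => ?_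
        by_cases h : G.Adj v w
        · rw [if_pos (G.adj_symm h), if_pos h, hqswap v w h]
        · rw [if_neg fun hh => h (G.adj_symm hh), if_neg h]
      have h3 : (∑ v : V, ∑ w : V, if G.Adj v w then - q v w else 0)
          = - ∑ v : V, ∑ w : V, if G.Adj v w then q v w else 0 := by
        rw [← Finset.sum_neg_distrib]
        refine Finset.sum_congr rfl fun v _ => ?_
        rw [← Finset.sum_neg_distrib]
        refine Finset.sum_congr rfl fun w _ => ?_
        by_cases h : G.Adj v w
        · rw [if_pos h, if_pos h]
        · rw [if_neg h, if_neg h, neg_zero]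
      rw [h3] at h2
      linarith
    rw [hanti, mul_zero, add_zero]
  -- absorbing states
  have habsT : P (fun _ => true) (fun _ => true) = 1 := by
    rw [hP]
    have e : ∀ v : V, ∀ w ∈ G.neighborFinset v,
        (f (fun _ => true) v / ∑ u : V, f (fun _ => true) u) * (1 / (G.degree v : ℝ))
          * (if (fun _ => true) = Function.update (fun _:V => true) w ((fun _:V => true) v)
              then (1:ℝ) else 0)
        = (f (fun _ => true) v / ∑ u : V, f (fun _ => true) u) * (1 / (G.degree v : ℝ)) := by
      intro v w _
      rw [if_pos (Function.update_eq_self w _).symm, mul_one]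
    rw [Finset.sum_congr rfl (fun v _ => Finset.sum_congr rfl (e v))]
    exact hcoef _
  have habsF : P (fun _ => false) (fun _ => false) = 1 := by
    rw [hP]
    have e : ∀ v : V, ∀ w ∈ G.neighborFinset v,
        (f (fun _ => false) v / ∑ u : V, f (fun _ => false) u) * (1 / (G.degree v : ℝ))
          * (if (fun _ => false) = Function.update (fun _:V => false) w ((fun _:V => false) v)
              then (1:ℝ) else 0)
        = (f (fun _ => false) v / ∑ u : V, f (fun _ => false) u) * (1 / (G.degree v : ℝ)) := by
      intro v w _
      rw [if_pos (Function.update_eq_self w _).symm, mul_one]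
    rw [Finset.sum_congr rfl (fun v _ => Finset.sum_congr rfl (e v))]
    exact hcoef _
  -- one step positivity
  have hstep : ∀ (S : V → Bool) (v w : V), w ∈ G.neighborFinset v →
      0 < P S (Function.update S w (S v)) := by
    intro S v w hw
    rw [hP]
    have hnn : ∀ (v' : V), ∀ w' ∈ G.neighborFinset v',
        (0:ℝ) ≤ (f S v' / ∑ u : V, f S u) * (1 / (G.degree v' : ℝ))
          * (if Function.update S w (S v) = Function.update S w' (S v') then 1 else 0) := by
      intro v' w' _
      have h1' := hfpos S v'
      have h2' := hF S
      have h3' := hdegR v'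
      have : (0:ℝ) ≤ (if Function.update S w (S v) = Function.update S w' (S v')
          then (1:ℝ) else 0) := by split <;> norm_num
      positivity
    have hterm : 0 < (f S v / ∑ u : V, f S u) * (1 / (G.degree v : ℝ))
        * (if Function.update S w (S v) = Function.update S w (S v) then (1:ℝ) else 0) := by
      rw [if_pos rfl, mul_one]
      have := hfpos S v
      have := hF S
      have := hdegR v
      positivity
    calc (0:ℝ) < _ := hterm
      _ ≤ ∑ w' ∈ G.neighborFinset v,
            (f S v / ∑ u : V, f S u) * (1 / (G.degree v : ℝ))
              * (if Function.update S w (S v) = Function.update S w' (S v) then 1 else 0) :=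
          Finset.single_le_sum (fun w' hw' => hnn v w' hw') hw
      _ ≤ ∑ v' : V, ∑ w' ∈ G.neighborFinset v',
            (f S v' / ∑ u : V, f S u) * (1 / (G.degree v' : ℝ))
              * (if Function.update S w (S v) = Function.update S w' (S v') then 1 else 0) :=
          Finset.single_le_sum
            (fun v' _ => Finset.sum_nonneg (fun w' hw' => hnn v' w' hw'))
            (Finset.mem_univ v)
  -- nonneg of powers
  have hp0 : ∀ n, ∀ a j : V → Bool, 0 ≤ (P ^ n) a j := by
    intro n
    induction n with
    | zero => intro a j; simp [Matrix.one_apply]; positivity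
    | succ n ih =>
      intro a j
      rw [pow_succ, Matrix.mul_apply]
      exact Finset.sum_nonneg fun k _ => mul_nonneg (ih a k) (h0 k j)
  -- one step of power from a state
  have hpow_step : ∀ n (a k : V → Bool),
      P a k * (P ^ n) k (fun _ => true) ≤ (P ^ (n+1)) a (fun _ => true) := by
    intro n a k
    rw [pow_succ', Matrix.mul_apply]
    exact Finset.single_le_sum
      (fun k' _ => mul_nonneg (h0 a k') (hp0 n k' _)) (Finset.mem_univ k)
  -- reach all-true
  have claim1 : ∀ n (S : V → Bool), (∃ v, S v = true) →
      (Finset.univ.filter (fun v => S v = false)).card ≤ n →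
      0 < (P ^ n) S (fun _ => true) := by
    intro n
    induction n with
    | zero =>
      intro S hex hc
      have hfe : (Finset.univ.filter (fun v => S v = false)) = ∅ :=
        Finset.card_eq_zero.mp (Nat.le_zero.mp hc)
      have hST : S = fun _ => true := by
        funext v
        by_contra hv
        have : v ∈ Finset.univ.filter (fun v => S v = false) := by
          simp only [Finset.mem_filter, Finset.mem_univ, true_and]
          exact Bool.not_eq_true (S v) ▸ hv
        rw [hfe] at this
        exact absurd this (Finset.notMem_empty v)
      rw [hST]
      simp [Matrix.one_apply]
    | succ n ih =>
      intro S hex hc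
      by_cases hS : S = fun _ => true
      · subst hS
        have hpos : 0 < (P ^ n) (fun _:V => true) (fun _ => true) := by
          apply ih _ ⟨Classical.arbitrary V, rfl⟩
          simp
        calc (0:ℝ) < P (fun _:V => true) (fun _ => true)
              * (P ^ n) (fun _:V => true) (fun _ => true) := by
              rw [habsT, one_mul]; exact hpos
          _ ≤ _ := hpow_step n _ _
      · obtain ⟨a, ha⟩ := hex
        have hw0 : ∃ w0, S w0 = false := by
          by_contra hcon
          push_neg at hcon
          exact hS (funext fun v => by
            have := hcon v
            cases hv : S v
            · exact absurd hv this
            · rfl)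
        obtain ⟨w0, hw0⟩ := hw0
        obtain ⟨p⟩ := hconn.preconnected a w0
        obtain ⟨v, w, hvw, hSv, hSw⟩ := exists_crossing p S ha hw0
        set S' := Function.update S w (S v) with hS'
        have hS'w : S' w = true := by rw [hS', Function.update_self, hSv]
        have hstep' : 0 < P S S' := hstep S v w ((G.mem_neighborFinset v w).mpr hvw)
        have hfil : Finset.univ.filter (fun x => S' x = false)
            = (Finset.univ.filter (fun x => S x = false)).erase w := by
          ext x
          simp only [Finset.mem_filter, Finset.mem_univ, true_and, Finset.mem_erase]
          by_cases hx : x = w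
          · subst hx
            simp [hS'w]
          · rw [hS', Function.update_of_ne hx]
            tauto
        have hwmem : w ∈ Finset.univ.filter (fun x => S x = false) := by
          simp [hSw]
        have hc' : (Finset.univ.filter (fun x => S' x = false)).card ≤ n := by
          rw [hfil, Finset.card_erase_of_mem hwmem]
          have h1'' : 1 ≤ (Finset.univ.filter (fun x => S x = false)).card :=
            Finset.card_pos.mpr ⟨w, hwmem⟩
          omega
        have hih := ih S' ⟨w, hS'w⟩ hc'
        calc (0:ℝ) < P S S' * (P ^ n) S' (fun _ => true) := mul_pos hstep' hih
          _ ≤ _ := hpow_step n _ _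
  -- stay at all-false
  have claim2 : ∀ n, 0 < (P ^ n) (fun _:V => false) (fun _ => false) := by
    intro n
    induction n with
    | zero => simp [Matrix.one_apply]
    | succ n ih =>
      have : P (fun _:V => false) (fun _ => false)
          * (P ^ n) (fun _:V => false) (fun _ => false)
            ≤ (P ^ (n+1)) (fun _:V => false) (fun _ => false) := by
        rw [pow_succ', Matrix.mul_apply]
        exact Finset.single_le_sum
          (fun k' _ => mul_nonneg (h0 _ k') (hp0 n k' _)) (Finset.mem_univ _)
      calc (0:ℝ) < P (fun _:V => false) (fun _ => false)
            * (P ^ n) (fun _:V => false) (fun _ => false) := by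
            rw [habsF, one_mul]; exact ih
        _ ≤ _ := this
  -- reachability of absorbing set
  have hreach : ∀ S : V → Bool,
      0 < (P ^ (Fintype.card V)) S (fun _ => true)
        + (P ^ (Fintype.card V)) S (fun _ => false) := by
    intro S
    by_cases hex : ∃ v, S v = true
    · have := claim1 (Fintype.card V) S hex
        (le_trans (Finset.card_filter_le _ _) (le_of_eq (Finset.card_univ)))
      have h2' := hp0 (Fintype.card V) S (fun _ => false)
      linarith
    · have hSf : S = fun _ => false := by
        push_neg at hex
        funext v
        have := hex v
        cases hv : S v
        · rfl
        · exact absurd hv this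
      subst hSf
      have := claim2 (Fintype.card V)
      have h2' := hp0 (Fintype.card V) (fun _:V => false) (fun _ => true)
      linarith
  -- final bounds on φ
  have hc : (0:ℝ) < ∑ j : V, (1:ℝ) / (G.degree j : ℝ) :=
    Finset.sum_pos (fun j _ => by have := hdegR j; positivity) Finset.univ_nonempty
  have hφ0 : ∀ S : V → Bool, 0 ≤ φ S := by
    intro S
    apply Finset.sum_nonneg
    intro x _
    have := hdegR x
    split <;> positivity
  have hφc : ∀ S : V → Bool, φ S ≤ ∑ j : V, (1:ℝ) / (G.degree j : ℝ) := by
    intro S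
    apply Finset.sum_le_sum
    intro x _
    have := hdegR x
    split
    · exact le_refl _
    · positivity
  have hφt : φ (fun _ => true) = ∑ j : V, (1:ℝ) / (G.degree j : ℝ) := by
    rw [hφdef]; simp
  have hφb : φ (fun _ => false) = 0 := by
    rw [hφdef]; simp
  have htb : (fun _:V => true) ≠ (fun _:V => false) := by
    intro h
    have := congrFun h (Classical.arbitrary V)
    simp at this
  have hmain := markov_absorb P h0 h1 (fun _ => true) (fun _ => false) htb habsT habsF
    φ (∑ j : V, (1:ℝ) / (G.degree j : ℝ)) hc hφ0 hφc hφt hφb hharm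
    (Fintype.card V) hreach (fun v => decide (v ∈ M))
  have hval : φ (fun v => decide (v ∈ M)) = ∑ i ∈ M, (1:ℝ) / (G.degree i : ℝ) := by
    rw [hφdef]
    simp only [decide_eq_true_eq]
    rw [Finset.sum_ite_mem, Finset.univ_inter]
  rw [hval] at hmain
  exact hmain
end
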